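/- Let R be a commutative ring and let M be the N×N block matrix over R[ε] with identity blocks I_{n_1},...,I_{n_m} along the block diagonal, variable-matrix blocks X^{(1)},...,X^{(m)} on the block superdiagonal (where X^{(i)} is n_i × n_{i+1} and n_1 = n_{m+1}), the block ε·I_{n_1} in the bottom-left corner, and zeros elsewhere (N = n_1 + ... + n_m). Then det(M) ≡ 1 + (−1)^{m+1} ε · tr(X^{(1)} X^{(2)} ⋯ X^{(m)}) modulo ε². -/
import Mathlib


open Polynomial

namespace DetBlockCyclicAux

section PathSum
variable {S : Type*} [CommRing S] {ι : Type*} [Fintype ι] [DecidableEq ι]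

lemma entry_ofFn_prod : ∀ (k : ℕ) (N : Fin k → Matrix ι ι S) (p q : ι),
    (List.ofFn N).prod p q =
      ∑ g : Fin k → ι,
        if (Fin.cons p g : Fin (k+1) → ι) (Fin.last k) = q then
          ∏ i : Fin k, N i ((Fin.cons p g : Fin (k+1) → ι) i.castSucc)
            ((Fin.cons p g : Fin (k+1) → ι) i.succ)
        else 0
  | 0, N, p, q => by
      simp [Matrix.one_apply]
  | (k+1), N, p, q => by
      rw [List.ofFn_succ, List.prod_cons, Matrix.mul_apply]
      simp_rw [entry_ofFn_prod k (fun i => N i.succ)]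
      rw [← Equiv.sum_comp (Fin.consEquiv (fun _ : Fin (k+1) => ι)), Fintype.sum_prod_type]
      refine Finset.sum_congr rfl fun r _ => ?_
      rw [Finset.mul_sum]
      refine Finset.sum_congr rfl fun g _ => ?_
      have hc : Fin.consEquiv (fun _ : Fin (k+1) => ι) (r, g) = Fin.cons r g := rfl
      rw [hc, mul_ite, mul_zero]
      have hlast : (Fin.cons p (Fin.cons r g) : Fin (k+2) → ι) (Fin.last (k+1))
          = (Fin.cons r g : Fin (k+1) → ι) (Fin.last k) := by
        rw [← Fin.succ_last, Fin.cons_succ]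
      rw [hlast]
      congr 1
      rw [Fin.prod_univ_succ]
      simp [← Fin.succ_castSucc]

lemma trace_cyclic (k : ℕ) (N : Fin (k+1) → Matrix ι ι S) :
    Matrix.trace (List.ofFn N).prod
      = ∑ w : Fin (k+1) → ι, ∏ i : Fin (k+1), N i (w i) (w (i + 1)) := by
  have h0 : Matrix.trace (List.ofFn N).prod = ∑ p : ι, (List.ofFn N).prod p p := rfl
  rw [h0]
  simp_rw [entry_ofFn_prod (k+1) N]
  rw [Finset.sum_comm]
  have hcollapse : ∀ g : Fin (k+1) → ι,
      (∑ p : ι, if (Fin.cons p g : Fin (k+2) → ι) (Fin.last (k+1)) = p then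
        ∏ i : Fin (k+1), N i ((Fin.cons p g : Fin (k+2) → ι) i.castSucc)
          ((Fin.cons p g : Fin (k+2) → ι) i.succ) else 0)
      = ∏ i : Fin (k+1), N i
          ((Fin.cons (g (Fin.last k)) g : Fin (k+2) → ι) i.castSucc)
          ((Fin.cons (g (Fin.last k)) g : Fin (k+2) → ι) i.succ) := by
    intro g
    have hl : ∀ p : ι, (Fin.cons p g : Fin (k+2) → ι) (Fin.last (k+1)) = g (Fin.last k) := by
      intro p; rw [← Fin.succ_last, Fin.cons_succ]
    simp_rw [hl]
    rw [Finset.sum_ite_eq Finset.univ (g (Fin.last k))]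
    simp
  simp_rw [hcollapse]
  refine Fintype.sum_equiv (Equiv.arrowCongr (Equiv.addRight (1 : Fin (k+1))) (Equiv.refl ι))
    _ _ fun g => ?_
  refine Finset.prod_congr rfl fun i _ => ?_
  have he : ∀ j : Fin (k+1),
      (Equiv.arrowCongr (Equiv.addRight (1 : Fin (k+1))) (Equiv.refl ι) g) j = g (j - 1) := by
    intro j; simp [Equiv.arrowCongr, sub_eq_add_neg]
  rw [he, he]
  have hB : (Fin.cons (g (Fin.last k)) g : Fin (k+2) → ι) i.succ = g (i + 1 - 1) := by
    rw [Fin.cons_succ, add_sub_cancel_right]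
  have hA : (Fin.cons (g (Fin.last k)) g : Fin (k+2) → ι) i.castSucc = g (i - 1) := by
    induction i using Fin.cases with
    | zero =>
        rw [Fin.castSucc_zero, Fin.cons_zero]
        congr 1
        rw [zero_sub]
        ext
        rw [Fin.coe_neg_one, Fin.val_last]
    | succ j =>
        rw [← Fin.succ_castSucc, Fin.cons_succ]
        congr 1
        rw [← Fin.coeSucc_eq_succ, add_sub_cancel_right]
  rw [hA, hB]

end PathSum

section Main

variable {R : Type*} [CommRing R] {k : ℕ} {n : Fin (k+1) → ℕ}

/-- The non-wrapping superdiagonal part. -/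
def Umat (X : ∀ i : Fin (k+1), Matrix (Fin (n i)) (Fin (n (i+1))) R) :
    Matrix ((i : Fin (k+1)) × Fin (n i)) ((i : Fin (k+1)) × Fin (n i)) R :=
  Matrix.of fun p q =>
    if h : q.1 = p.1 + 1 ∧ (p.1 : ℕ) ≠ k then X p.1 p.2 (Fin.cast (congrArg n h.1) q.2) else 0

/-- The wrap-around part. -/
def Wmat (X : ∀ i : Fin (k+1), Matrix (Fin (n i)) (Fin (n (i+1))) R) :
    Matrix ((i : Fin (k+1)) × Fin (n i)) ((i : Fin (k+1)) × Fin (n i)) R :=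
  Matrix.of fun p q =>
    if h : q.1 = p.1 + 1 ∧ (p.1 : ℕ) = k then X p.1 p.2 (Fin.cast (congrArg n h.1) q.2) else 0

variable (X : ∀ i : Fin (k+1), Matrix (Fin (n i)) (Fin (n (i+1))) R)

lemma Umat_support {p q : (i : Fin (k+1)) × Fin (n i)} (h : Umat X p q ≠ 0) :
    (q.1 : ℕ) = (p.1 : ℕ) + 1 := by
  by_contra hc
  apply h
  rw [Umat, Matrix.of_apply, dif_neg]
  rintro ⟨h1, h2⟩
  apply hc
  rw [h1, Fin.val_add_one]
  rw [if_neg]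
  intro hl
  exact h2 (by rw [hl, Fin.val_last])

lemma Wmat_support {p q : (i : Fin (k+1)) × Fin (n i)} (h : Wmat X p q ≠ 0) :
    (p.1 : ℕ) = k ∧ (q.1 : ℕ) = 0 := by
  by_contra hc
  apply h
  rw [Wmat, Matrix.of_apply, dif_neg]
  rintro ⟨h1, h2⟩
  apply hc
  refine ⟨h2, ?_⟩
  have : p.1 = Fin.last k := Fin.ext (by rw [Fin.val_last]; exact h2)
  rw [h1, this, Fin.last_add_one, Fin.val_zero]

lemma Umat_pow_support : ∀ (t : ℕ) {p q : (i : Fin (k+1)) × Fin (n i)},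
    (Umat X ^ t) p q ≠ 0 → (q.1 : ℕ) = (p.1 : ℕ) + t := by
  intro t
  induction t with
  | zero =>
      intro p q h
      rw [pow_zero] at h
      by_contra hc
      exact h (Matrix.one_apply_ne (fun he => hc (by rw [he]; ring)))
  | succ s ih =>
      intro p q h
      rw [pow_succ, Matrix.mul_apply] at h
      obtain ⟨r, _, hr⟩ := Finset.exists_ne_zero_of_sum_ne_zero h
      have h1 : (Umat X ^ s) p r ≠ 0 := fun hz => hr (by rw [hz, zero_mul])
      have h2 : Umat X r q ≠ 0 := fun hz => hr (by rw [hz, mul_zero])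
      rw [Umat_support X h2, ih h1]
      ring

lemma Umat_pow_eq_zero : Umat X ^ (k+1) = 0 := by
  ext p q
  rw [Matrix.zero_apply]
  by_contra h
  have := Umat_pow_support X (k+1) h
  omega

end Main

end DetBlockCyclicAux

namespace DetBlockCyclicAux
section Main2
variable {R : Type*} [CommRing R] {k : ℕ} {n : Fin (k+1) → ℕ}
variable (X : ∀ i : Fin (k+1), Matrix (Fin (n i)) (Fin (n (i+1))) R)

noncomputable def Pmat (X : ∀ i : Fin (k+1), Matrix (Fin (n i)) (Fin (n (i+1))) R) :
    Matrix ((i : Fin (k+1)) × Fin (n i)) ((i : Fin (k+1)) × Fin (n i)) R :=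
  ∑ t ∈ Finset.range (k+1), (- Umat X) ^ t

lemma Pmat_mul : Pmat X * (1 + Umat X) = 1 := by
  have hg := geom_sum_mul (- Umat X) (k+1)
  have hz : (- Umat X) ^ (k+1) = 0 := by
    rw [neg_pow, Umat_pow_eq_zero, mul_zero]
  rw [hz, zero_sub] at hg
  have : Pmat X * (1 + Umat X) = -(Pmat X * (- Umat X - 1)) := by
    rw [Pmat]; noncomm_ring
  rw [this, Pmat, hg, neg_neg]

lemma det_one_add_Umat : (1 + Umat X).det = 1 := by
  have hbt : (1 + Umat X).BlockTriangular (fun p => (p.1 : ℕ)) := by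
    intro p q hlt
    have hlt' : (q.1 : ℕ) < (p.1 : ℕ) := hlt
    rw [Matrix.add_apply, Matrix.one_apply_ne, zero_add]
    · by_contra h
      have := Umat_support X h
      omega
    · intro he; rw [he] at hlt'; exact lt_irrefl _ hlt'
  rw [hbt.det]
  refine Finset.prod_eq_one fun a _ => ?_
  have : (1 + Umat X).toSquareBlock (fun p => (p.1 : ℕ)) a = 1 := by
    ext p q
    rw [Matrix.toSquareBlock_def, Matrix.of_apply]
    rw [Matrix.add_apply, Matrix.one_apply, Matrix.one_apply]
    have hU : Umat X p.1 q.1 = 0 := by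
      by_contra h
      have := Umat_support X h
      have hp : ((p.1).1 : ℕ) = a := p.2
      have hq : ((q.1).1 : ℕ) = a := q.2
      omega
    rw [hU, add_zero]
    by_cases hpq : (p : (i : Fin (k+1)) × Fin (n i)) = q
    · rw [if_pos hpq, if_pos (Subtype.ext hpq)]
    · rw [if_neg hpq, if_neg (fun h => hpq (congrArg Subtype.val h))]
  rw [this, Matrix.det_one]

lemma trace_Upow_mul_W_eq_zero {t : ℕ} (ht : t ≠ k) :
    Matrix.trace (Umat X ^ t * Wmat X) = 0 := by
  rw [Matrix.trace]
  refine Finset.sum_eq_zero fun p _ => ?_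
  rw [Matrix.diag_apply, Matrix.mul_apply]
  refine Finset.sum_eq_zero fun r _ => ?_
  by_cases hw : Wmat X r p = 0
  · rw [hw, mul_zero]
  · obtain ⟨h1, h2⟩ := Wmat_support X hw
    have hU : (Umat X ^ t) p r = 0 := by
      by_contra h
      have := Umat_pow_support X t h
      omega
    rw [hU, zero_mul]

end Main2
end DetBlockCyclicAux

namespace DetBlockCyclicAux
section Main3
variable {R : Type*} [CommRing R] {k : ℕ} {n : Fin (k+1) → ℕ}
variable (X : ∀ i : Fin (k+1), Matrix (Fin (n i)) (Fin (n (i+1))) R)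

lemma ofFn_prod_eq : (List.ofFn (fun i : Fin (k+1) =>
    if (i : ℕ) = k then Wmat X else Umat X)).prod = Umat X ^ k * Wmat X := by
  rw [List.ofFn_succ']
  have h1 : (fun i : Fin k => if ((i.castSucc : Fin (k+1)) : ℕ) = k then Wmat X else Umat X)
      = fun _ : Fin k => Umat X := by
    funext i
    rw [if_neg]
    exact Nat.ne_of_lt (by simpa using i.isLt)
  have h2 : ((Fin.last k : Fin (k+1)) : ℕ) = k := Fin.val_last k
  rw [h1, if_pos h2, List.ofFn_const, List.concat_eq_append, List.prod_append,
    List.prod_replicate, List.prod_cons, List.prod_nil, mul_one]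

lemma trace_Upowk_mul_W :
    Matrix.trace (Umat X ^ k * Wmat X)
      = ∑ f : (i : Fin (k+1)) → Fin (n i), ∏ i : Fin (k+1), X i (f i) (f (i + 1)) := by
  rw [← ofFn_prod_eq, trace_cyclic]
  set N : Fin (k+1) → Matrix ((i : Fin (k+1)) × Fin (n i)) ((i : Fin (k+1)) × Fin (n i)) R :=
    fun i => if (i : ℕ) = k then Wmat X else Umat X with hN
  set emb : ((i : Fin (k+1)) → Fin (n i)) → (Fin (k+1) → (i : Fin (k+1)) × Fin (n i)) :=
    fun f i => ⟨i, f i⟩ with hemb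
  have hinj : Function.Injective emb := by
    intro f f' h
    funext j
    have := congrFun h j
    rw [hemb] at this
    exact eq_of_heq (Sigma.mk.inj_iff.mp this).2
  rw [← Finset.sum_subset (Finset.subset_univ (Finset.image emb Finset.univ))]
  · rw [Finset.sum_image (fun f _ f' _ h => hinj h)]
    refine Finset.sum_congr rfl fun f _ => ?_
    refine Finset.prod_congr rfl fun i _ => ?_
    by_cases hik : (i : ℕ) = k
    · simp only [if_pos hik]
      rw [hemb]
      rw [show Wmat X ⟨i, f i⟩ ⟨i+1, f (i+1)⟩
          = X i (f i) (Fin.cast (congrArg n (rfl : i + 1 = i + 1)) (f (i+1))) from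
        dif_pos ⟨rfl, hik⟩]
      exact congrArg _ (Fin.ext rfl)
    · simp only [if_neg hik]
      rw [hemb]
      rw [show Umat X ⟨i, f i⟩ ⟨i+1, f (i+1)⟩
          = X i (f i) (Fin.cast (congrArg n (rfl : i + 1 = i + 1)) (f (i+1))) from
        dif_pos ⟨rfl, hik⟩]
      exact congrArg _ (Fin.ext rfl)
  · intro w _ hw
    by_contra hterm
    have hfac : ∀ i : Fin (k+1), N i (w i) (w (i+1)) ≠ 0 := by
      intro i hz
      exact hterm (Finset.prod_eq_zero (Finset.mem_univ i) hz)
    have hlastfac := hfac (Fin.last k)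
    rw [hN] at hlastfac
    simp only [Fin.val_last, if_pos rfl] at hlastfac
    rw [Fin.last_add_one] at hlastfac
    obtain ⟨hwl, hw0⟩ := Wmat_support X hlastfac
    have hstep : ∀ i : Fin (k+1), (i : ℕ) < k → ((w (i+1)).1 : ℕ) = ((w i).1 : ℕ) + 1 := by
      intro i hik
      have hf := hfac i
      rw [hN] at hf
      simp only [if_neg (Nat.ne_of_lt hik)] at hf
      exact Umat_support X hf
    have hblock : ∀ t : ℕ, (ht : t ≤ k) → ((w ⟨t, Nat.lt_succ_of_le ht⟩).1 : ℕ) = t := by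
      intro t
      induction t with
      | zero => intro _; exact hw0
      | succ s ih =>
          intro hs
          have hs' : s ≤ k := Nat.le_of_succ_le hs
          have hik : ((⟨s, Nat.lt_succ_of_le hs'⟩ : Fin (k+1)) : ℕ) < k := hs
          have := hstep ⟨s, Nat.lt_succ_of_le hs'⟩ hik
          have hadd : (⟨s, Nat.lt_succ_of_le hs'⟩ : Fin (k+1)) + 1
              = ⟨s+1, Nat.lt_succ_of_le hs⟩ := by
            ext
            rw [Fin.val_add_one, if_neg]
            intro hl
            have : s = k := by simpa using congrArg Fin.val hl
            omega
          rw [hadd] at this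
          rw [this, ih hs']
    apply hw
    have hwall : ∀ j : Fin (k+1), ((w j).1 : ℕ) = (j : ℕ) := by
      intro j
      have := hblock (j : ℕ) (Nat.lt_succ_iff.mp j.isLt)
      simpa using this
    refine Finset.mem_image.mpr ⟨fun j => Fin.cast (congrArg n (Fin.ext (hwall j))) (w j).2,
      Finset.mem_univ _, ?_⟩
    funext j
    rw [hemb]
    refine Sigma.ext ?_ ?_
    · exact (Fin.ext (hwall j)).symm
    · exact (Fin.heq_ext_iff (congrArg n (Fin.ext (hwall j))).symm).mpr rfl

end Main3
end DetBlockCyclicAux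

open DetBlockCyclicAux

/-- Let M be the N×N block matrix (N = n₁ + ... + n_m) over R[ε] with
identity blocks I_{n₁},...,I_{n_m} on the block diagonal, the block X⁽ⁱ⁾ (of size
nᵢ × n_{i+1}, indices cyclic so that n_{m+1} = n₁) in block position (i, i+1) for
i < m, the block ε·X⁽ᵐ⁾ in the bottom-left corner (block position (m,1), carrying the
factor ε of the cyclic wrap-around), and zeros elsewhere.  Then
det(M) ≡ 1 + (−1)^{m+1} ε · tr(X⁽¹⁾X⁽²⁾⋯X⁽ᵐ⁾)  (mod ε²),
where tr(X⁽¹⁾⋯X⁽ᵐ⁾) = Σ_{j₁,...,j_m} X⁽¹⁾_{j₁j₂} X⁽²⁾_{j₂j₃} ⋯ X⁽ᵐ⁾_{j_m j₁}. -/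
theorem det_block_cyclic_mod_eps_sq (R : Type*) [CommRing R] (m : ℕ) [NeZero m]
    (n : Fin m → ℕ) (X : (i : Fin m) → Matrix (Fin (n i)) (Fin (n (i + 1))) R) :
    (Polynomial.X : R[X]) ^ 2 ∣
      (Matrix.det (Matrix.of fun p q : (i : Fin m) × Fin (n i) =>
          (if p = q then (1 : R[X]) else 0) +
          (if h : q.1 = p.1 + 1 then
            (if (p.1 : ℕ) = m - 1 then (Polynomial.X : R[X]) else 1) *
              Polynomial.C (X p.1 p.2 (Fin.cast (congrArg n h) q.2))
          else 0))
        - (1 + (-1) ^ (m + 1) * Polynomial.X *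
            Polynomial.C (∑ f : (i : Fin m) → Fin (n i), ∏ i : Fin m, X i (f i) (f (i + 1))))) := by
  obtain ⟨k, rfl⟩ : ∃ k, m = k + 1 := ⟨m - 1, (Nat.succ_pred_eq_of_pos (NeZero.pos m)).symm⟩
  set s : R := ∑ f : (i : Fin (k+1)) → Fin (n i), ∏ i : Fin (k+1), X i (f i) (f (i + 1)) with hs
  set M : Matrix ((i : Fin (k+1)) × Fin (n i)) ((i : Fin (k+1)) × Fin (n i)) R[X] :=
    Matrix.of (fun p q : (i : Fin (k+1)) × Fin (n i) =>
      (if p = q then (1 : R[X]) else 0) +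
      (if h : q.1 = p.1 + 1 then
        (if (p.1 : ℕ) = k + 1 - 1 then (Polynomial.X : R[X]) else 1) *
          Polynomial.C (X p.1 p.2 (Fin.cast (congrArg n h) q.2))
      else 0)) with hMdef
  have hMdecomp : M = (C : R →+* R[X]).mapMatrix (1 + Umat X)
      + (Polynomial.X : R[X]) • (C : R →+* R[X]).mapMatrix (Wmat X) := by
    refine Matrix.ext fun p q => ?_
    simp only [hMdef, RingHom.mapMatrix_apply, Matrix.of_apply, Matrix.add_apply,
      Matrix.smul_apply, Matrix.map_apply, Matrix.one_apply, Umat, Wmat,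
      Nat.add_sub_cancel, map_add, apply_ite (⇑(C : R →+* R[X])), map_one, map_zero,
      smul_eq_mul]
    by_cases h : q.1 = p.1 + 1
    · by_cases hk : (p.1 : ℕ) = k
      · rw [dif_pos h, if_pos hk,
          dif_neg (show ¬(q.1 = p.1 + 1 ∧ (p.1 : ℕ) ≠ k) from fun hc => hc.2 hk),
          dif_pos (show q.1 = p.1 + 1 ∧ (p.1 : ℕ) = k from ⟨h, hk⟩)]
        simp
      · rw [dif_pos h, if_neg hk,
          dif_pos (show q.1 = p.1 + 1 ∧ (p.1 : ℕ) ≠ k from ⟨h, hk⟩),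
          dif_neg (show ¬(q.1 = p.1 + 1 ∧ (p.1 : ℕ) = k) from fun hc => hk hc.2)]
        simp
    · rw [dif_neg h,
        dif_neg (show ¬(q.1 = p.1 + 1 ∧ (p.1 : ℕ) ≠ k) from fun hc => h hc.1),
        dif_neg (show ¬(q.1 = p.1 + 1 ∧ (p.1 : ℕ) = k) from fun hc => h hc.1)]
      simp
  have h1 : (C : R →+* R[X]).mapMatrix (Pmat X) * (C : R →+* R[X]).mapMatrix (1 + Umat X)
      = 1 := by
    rw [← map_mul, Pmat_mul, map_one]
  have hPM : (C : R →+* R[X]).mapMatrix (Pmat X) * M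
      = 1 + (Polynomial.X : R[X]) • ((C : R →+* R[X]).mapMatrix (Pmat X * Wmat X)) := by
    rw [hMdecomp, mul_add, mul_smul_comm, h1, ← map_mul]
  have h2 : (C : R →+* R[X]).mapMatrix (1 + Umat X) * (C : R →+* R[X]).mapMatrix (Pmat X)
      = 1 := mul_eq_one_comm.mp h1
  have hM2 : M = (C : R →+* R[X]).mapMatrix (1 + Umat X)
      * (1 + (Polynomial.X : R[X]) • ((C : R →+* R[X]).mapMatrix (Pmat X * Wmat X))) := by
    conv_lhs => rw [← one_mul M, ← h2, mul_assoc, hPM]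
  have hdet : M.det
      = (1 + (Polynomial.X : R[X]) • ((C : R →+* R[X]).mapMatrix (Pmat X * Wmat X))).det := by
    rw [hM2, Matrix.det_mul, ← RingHom.map_det, det_one_add_Umat, map_one, one_mul]
  have htr : Matrix.trace (Pmat X * Wmat X) = (-1 : R)^k * s := by
    rw [Pmat, Finset.sum_mul, Matrix.trace_sum]
    have hterm : ∀ t : ℕ, Matrix.trace ((- Umat X)^t * Wmat X)
        = (-1 : R)^t • Matrix.trace ((Umat X)^t * Wmat X) := by
      intro t
      rw [← neg_one_smul R (Umat X), _root_.smul_pow, smul_mul_assoc, Matrix.trace_smul]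
    simp_rw [hterm]
    rw [Finset.sum_eq_single k]
    · rw [trace_Upowk_mul_W, smul_eq_mul, hs]
    · intro t _ ht
      rw [trace_Upow_mul_W_eq_zero X ht, smul_zero]
    · intro hk
      exact absurd (Finset.self_mem_range_succ k) hk
  have hexp := Matrix.det_one_add_X_smul (Pmat X * Wmat X)
  rw [← RingHom.mapMatrix_apply] at hexp
  rw [hdet, hexp, htr]
  have hsm : ((-1 : R)^k * s) • (Polynomial.X : R[X])
      = (-1 : R[X])^(k + 1 + 1) * Polynomial.X * C s := by
    rw [Polynomial.smul_eq_C_mul, map_mul, map_pow, map_neg, map_one]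
    have hpow : (-1 : R[X])^(k+1+1) = (-1)^k := by
      rw [pow_succ, pow_succ]; ring
    rw [hpow]; ring
  rw [hsm]
  exact ⟨((1 + (Polynomial.X : R[X]) •
      (C : R →+* R[X]).mapMatrix (Pmat X * Wmat X)).det).divX.divX, by ring⟩
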